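/- Let $k \geq 2$ and define $E = \bigcup_{j=1}^{k-2}[-2^j\pi, -2^j\pi + \frac{2^j\pi}{2^k-1}) \cup [-\pi, \frac{-(2^k-2)\pi}{2^k-1}) \cup [\frac{-2^{k-1}\pi}{2^k-1}, \frac{2^{k-1}\pi}{2^k-1}) \cup [\frac{(2^k-2)\pi}{2^k-1}, \pi) \cup \bigcup_{j=1}^{k-2}[2^j\pi - \frac{2^j\pi}{2^k-1}, 2^j\pi)$. Then $E \subseteq 2E$, where $2E = \{2x : x \in E\}$. -/
import Mathlib


open Real Set

/-- The generalized scaling set `E` for dilation 2. -/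
noncomputable def genScalingSet2 (k : ℕ) : Set ℝ :=
  (⋃ j ∈ Finset.Icc 1 (k - 2),
      Ico (-((2:ℝ)^j * π)) (-((2:ℝ)^j * π) + (2:ℝ)^j * π / ((2:ℝ)^k - 1))) ∪
    Ico (-π) (-(((2:ℝ)^k - 2) * π) / ((2:ℝ)^k - 1)) ∪
    Ico (-((2:ℝ)^(k-1) * π) / ((2:ℝ)^k - 1)) (((2:ℝ)^(k-1) * π) / ((2:ℝ)^k - 1)) ∪
    Ico ((((2:ℝ)^k - 2) * π) / ((2:ℝ)^k - 1)) π ∪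
    ⋃ j ∈ Finset.Icc 1 (k - 2),
      Ico ((2:ℝ)^j * π - (2:ℝ)^j * π / ((2:ℝ)^k - 1)) ((2:ℝ)^j * π)

/-- `E ⊆ 2E` for the generalized scaling set `E`. -/
theorem genScalingSet2_subset_dilate (k : ℕ) (hk : 2 ≤ k) :
    genScalingSet2 k ⊆ (fun x : ℝ => 2 * x) '' genScalingSet2 k := by
  have hπ := Real.pi_pos
  have h4 : (4:ℝ) ≤ 2^k := by
    calc (4:ℝ) = 2^2 := by norm_num
    _ ≤ 2^k := pow_le_pow_right₀ (by norm_num) hk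
  have hc : (0:ℝ) < 2^k - 1 := by linarith
  have hc' : ((2:ℝ)^k - 1) ≠ 0 := ne_of_gt hc
  have hkk : (2:ℝ)^k = 2 * 2^(k-1) := by
    conv_lhs => rw [show k = (k-1)+1 by omega]
    rw [pow_succ]; ring
  -- key equality: (2^k-2)π/(2^k-1) = π - π/(2^k-1)
  have e1 : (((2:ℝ)^k - 2) * π) / ((2:ℝ)^k - 1) = π - π / ((2:ℝ)^k - 1) := by
    field_simp; ring
  -- key inequality: π/2 ≤ 2^{k-1}π/(2^k-1)
  have key : π / 2 ≤ (2:ℝ)^(k-1) * π / ((2:ℝ)^k - 1) := by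
    rw [div_le_div_iff₀ (by norm_num) hc]
    nlinarith
  have ha : (0:ℝ) ≤ (2:ℝ)^(k-1) * π / ((2:ℝ)^k - 1) := by positivity
  have ht : (0:ℝ) < π / ((2:ℝ)^k - 1) := by positivity
  have hπc : π / ((2:ℝ)^k - 1) < π := div_lt_self hπ (by linarith)
  have e2 : (2:ℝ) * π / ((2:ℝ)^k - 1) = 2 * (π / ((2:ℝ)^k - 1)) := by ring
  intro x hx
  refine ⟨x / 2, ?_, by simp; ring⟩
  simp only [genScalingSet2, Set.mem_union, Set.mem_iUnion, Set.mem_Ico,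
    Finset.mem_Icc] at hx ⊢
  rcases hx with ((((⟨j, ⟨hj1, hj2⟩, hxl, hxr⟩ | hB) | hC) | hD) | ⟨j, ⟨hj1, hj2⟩, hxl, hxr⟩)
  · -- left tail piece A_j
    rcases eq_or_lt_of_le hj1 with h1 | h1
    · -- j = 1 : lands in B
      left; left; left; right
      rw [← h1] at hxl hxr
      norm_num [e2] at hxl hxr
      rw [neg_div, e1]
      constructor <;> linarith
    · -- j ≥ 2 : lands in A_{j-1}
      left; left; left; left
      refine ⟨j - 1, ⟨by omega, by omega⟩, ?_, ?_⟩
      · have hjj : (2:ℝ)^j = 2 * 2^(j-1) := by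
          conv_lhs => rw [show j = (j-1)+1 by omega]
          rw [pow_succ]; ring
        rw [hjj] at hxl hxr
        linarith
      · have hjj : (2:ℝ)^j = 2 * 2^(j-1) := by
          conv_lhs => rw [show j = (j-1)+1 by omega]
          rw [pow_succ]; ring
        rw [hjj] at hxl hxr
        have : (2:ℝ) * 2^(j-1) * π / (2^k - 1) = 2 * (2^(j-1) * π / (2^k - 1)) := by
          ring
        rw [this] at hxr
        linarith
  · -- B lands in C
    left; left; right
    rw [neg_div, e1] at hB
    have en : -((2:ℝ)^(k-1) * π) / ((2:ℝ)^k - 1) = -((2:ℝ)^(k-1) * π / ((2:ℝ)^k - 1)) := by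
      ring
    rw [en]
    constructor <;> [linarith [hB.1]; linarith [hB.2, hπc, ha]]
  · -- C lands in C
    left; left; right
    have en : -((2:ℝ)^(k-1) * π) / ((2:ℝ)^k - 1) = -((2:ℝ)^(k-1) * π / ((2:ℝ)^k - 1)) := by
      ring
    rw [en] at hC ⊢
    constructor <;> linarith [hC.1, hC.2]
  · -- D lands in C
    left; left; right
    rw [e1] at hD
    have en : -((2:ℝ)^(k-1) * π) / ((2:ℝ)^k - 1) = -((2:ℝ)^(k-1) * π / ((2:ℝ)^k - 1)) := by
      ring
    rw [en]
    constructor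
    · linarith [hD.1, hπc, ha]
    · linarith [hD.2]
  · -- right tail piece F_j
    rcases eq_or_lt_of_le hj1 with h1 | h1
    · -- j = 1 : lands in D
      left; right
      rw [← h1] at hxl hxr
      norm_num [e2] at hxl hxr
      rw [e1]
      constructor <;> linarith
    · -- j ≥ 2 : lands in F_{j-1}
      right
      refine ⟨j - 1, ⟨by omega, by omega⟩, ?_, ?_⟩ <;>
      · have hjj : (2:ℝ)^j = 2 * 2^(j-1) := by
          conv_lhs => rw [show j = (j-1)+1 by omega]
          rw [pow_succ]; ring
        rw [hjj] at hxl hxr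
        have : (2:ℝ) * 2^(j-1) * π / (2^k - 1) = 2 * (2^(j-1) * π / (2^k - 1)) := by
          ring
        rw [this] at hxl
        linarith
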